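/- Let R be a reflexive digraph in 𝔗_a with R_× = R* (no proper arc vw of R admits a path of length ≥ 2 in R* from v to w). Then R ∈ 𝕽, and for every G ∈ 𝔗_a with 𝓢(G,R) ≠ ∅: (i) for every nonempty set 𝓛 of subgraphs of G, 𝓜^𝓛(G,R) = {ξ ∈ 𝓗(G,R) : ξ restricted to V(L) lies in 𝓢(L,R) for all L ∈ 𝓛}; (ii) 𝓜(G,R) = {ξ ∈ 𝓗(G,R) : ι_ξ(v,w) = 2 for all vw ∈ A(G*)} = 𝓢(G,R). -/

import Mathlib

/-- A finite digraph: a finite nonempty vertex set `V ⊆ ℕ` together with an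
arc set `A ⊆ V × V`. -/
structure Dgraph where
  V : Finset ℕ
  nonempty : V.Nonempty
  A : Finset (ℕ × ℕ)
  A_sub : ∀ p ∈ A, p.1 ∈ V ∧ p.2 ∈ V

namespace Dgraph

/-- The set of proper arcs of `G`, i.e. the arc set of `G*`. -/
def Astar (G : Dgraph) : Finset (ℕ × ℕ) := G.A.filter (fun p => p.1 ≠ p.2)

/-- `G` is reflexive. -/
def IsRefl (G : Dgraph) : Prop := ∀ v ∈ G.V, (v, v) ∈ G.A

/-- `p` is a path in `G` (a nonempty list of pairwise distinct vertices,
consecutive ones joined by arcs).  Its length as a path is `p.length - 1`. -/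
def IsPath (G : Dgraph) (p : List ℕ) : Prop :=
  p ≠ [] ∧ p.Nodup ∧ (∀ v ∈ p, v ∈ G.V) ∧ p.Chain' (fun v w => (v, w) ∈ G.A)

/-- `p` is a path in `G*`. -/
def IsPathStar (G : Dgraph) (p : List ℕ) : Prop :=
  p ≠ [] ∧ p.Nodup ∧ (∀ v ∈ p, v ∈ G.V) ∧ p.Chain' (fun v w => (v, w) ∈ G.A ∧ v ≠ w)

/-- `G*` contains a closed walk. -/
def HasClosedWalkStar (G : Dgraph) : Prop :=
  ∃ p : List ℕ, (∀ v ∈ p, v ∈ G.V) ∧ p.Chain' (fun v w => (v, w) ∈ G.A ∧ v ≠ w) ∧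
    2 ≤ p.length ∧ p.head? = p.getLast?

/-- membership in the class `𝔗ₐ`: `G*` is acyclic. -/
def MemTa (G : Dgraph) : Prop := ¬ G.HasClosedWalkStar

/-- The height of `G`: the maximal length of a path in `G`. -/
noncomputable def height (G : Dgraph) : ℕ :=
  sSup {n | ∃ p, G.IsPath p ∧ p.length = n + 1}

/-- The interval `[v,w]_G`. -/
def interval (G : Dgraph) (v w : ℕ) : Finset ℕ :=
  G.V.filter (fun z => (v, z) ∈ G.A ∧ (z, w) ∈ G.A)

/-- `ι(v,w)_G`, the cardinality of the interval `[v,w]_G`. -/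
def iota (G : Dgraph) (v w : ℕ) : ℕ := (G.interval v w).card

/-- The set `𝓗(G,H)` of homomorphisms from `G` to `H` (represented as total
maps `ℕ → ℕ`, normalized to `0` outside of `V(G)`). -/
def Hom (G H : Dgraph) : Set (ℕ → ℕ) :=
  {f | (∀ v ∈ G.V, f v ∈ H.V) ∧ (∀ p ∈ G.A, (f p.1, f p.2) ∈ H.A) ∧
    ∀ v, v ∉ G.V → f v = 0}

/-- The set `𝓢(G,H)` of strict homomorphisms from `G` to `H`. -/
def SHom (G H : Dgraph) : Set (ℕ → ℕ) :=
  {f ∈ Hom G H | ∀ p ∈ G.Astar, f p.1 ≠ f p.2}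

/-- `μ_ξ(G)`, for a homomorphism `ξ` from `G` into `H`. -/
def mu (G H : Dgraph) (f : ℕ → ℕ) : ℕ :=
  ∑ p ∈ G.Astar, H.iota (f p.1) (f p.2)

/-- `L` is a subgraph of `G`. -/
def Subgraph (L G : Dgraph) : Prop := L.V ⊆ G.V ∧ L.A ⊆ G.A

/-- Restriction of a map to a vertex set (normalized to `0` outside). -/
def restrict (X : Finset ℕ) (f : ℕ → ℕ) : ℕ → ℕ := fun x => if x ∈ X then f x else 0

/-- `𝓜(L,H)`: homomorphisms from `L` to `H` with maximal `μ`. -/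
def MSet (L H : Dgraph) : Set (ℕ → ℕ) :=
  {f ∈ Hom L H | ∀ g ∈ Hom L H, mu L H g ≤ mu L H f}

/-- `𝓜^𝓛(G,H)`. -/
def MLSet (G H : Dgraph) (𝓛 : Set Dgraph) : Set (ℕ → ℕ) :=
  {f ∈ Hom G H | ∀ L ∈ 𝓛, restrict L.V f ∈ MSet L H}

/-- `𝓙^𝓛_{G,H'}(ξ)` for `ξ ∈ 𝓗(G,H)`. -/
def JSet (G H H' : Dgraph) (𝓛 : Set Dgraph) (ξ : ℕ → ℕ) : Set (ℕ → ℕ) :=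
  {ζ ∈ Hom G H' | ∀ L ∈ 𝓛, ∀ p ∈ L.Astar,
    H'.iota (ζ p.1) (ζ p.2) = H.iota (ξ p.1) (ξ p.2)}

/-- The digraph `P_×` of a path `P = P_0, …, P_ℓ`: vertex set `{P_0,…,P_ℓ}`
and arcs `P_{i-1}P_i`. -/
def pathGraph (P : List ℕ) (h : P ≠ []) : Dgraph where
  V := P.toFinset
  nonempty := by
    obtain ⟨a, t, rfl⟩ := List.exists_cons_of_ne_nil h
    exact ⟨a, by simp⟩
  A := (P.zip P.tail).toFinset
  A_sub := by
    intro p hp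
    rw [List.mem_toFinset] at hp
    have h1 := List.of_mem_zip hp
    exact ⟨List.mem_toFinset.mpr h1.1, List.mem_toFinset.mpr (List.mem_of_mem_tail h1.2)⟩

/-- `𝓛(G)`: the set of the digraphs `P_×` for the paths `P` of length `h_G` in `G`. -/
def LSet (G : Dgraph) : Set Dgraph :=
  {D | ∃ (P : List ℕ) (h : P ≠ []), G.IsPath P ∧ P.length = G.height + 1 ∧
    D = pathGraph P h}

/-- The class `𝕽`: reflexive digraphs `R ∈ 𝔗ₐ` with
`𝓜^{𝓛(R)}(R,R) ∩ 𝓢(R,R) ≠ ∅`. -/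
def MemR (R : Dgraph) : Prop :=
  R.MemTa ∧ R.IsRefl ∧ (MLSet R R (LSet R) ∩ SHom R R).Nonempty

/-- `G` is a poset: reflexive, antisymmetric and transitive. -/
def IsPoset (G : Dgraph) : Prop :=
  G.IsRefl ∧ (∀ v w, (v, w) ∈ G.A → (w, v) ∈ G.A → v = w) ∧
    (∀ u v w, (u, v) ∈ G.A → (v, w) ∈ G.A → (u, w) ∈ G.A)

/-- The class `𝔗ₐ^{=n}`: digraphs in `𝔗ₐ` of height `n` in which every vertex
lies on a path of length `n`. -/
def MemTaEq (n : ℕ) (G : Dgraph) : Prop :=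
  G.MemTa ∧ G.height = n ∧ ∀ v ∈ G.V, ∃ p, G.IsPath p ∧ p.length = n + 1 ∧ v ∈ p

/-- A maximal path in `G`: no path in `G` properly contains its vertex set. -/
def MaximalPath (G : Dgraph) (P : List ℕ) : Prop :=
  G.IsPath P ∧ ∀ Q, G.IsPath Q → (∀ v ∈ P, v ∈ Q) → ∀ v ∈ Q, v ∈ P

end Dgraph

open Dgraph

/-- `R_× = R*`: no proper arc `vw` of `R` admits a path of length ≥ 2 in `R*`
from `v` to `w`. -/
def NoTwoStep (R : Dgraph) : Prop :=
  ∀ p ∈ R.Astar, ¬ ∃ q : List ℕ, R.IsPathStar q ∧ 3 ≤ q.length ∧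
    q.head? = some p.1 ∧ q.getLast? = some p.2


section Aux

variable {R : Dgraph}

lemma aux_iota_loop (hRr : R.IsRefl) (hRt : R.MemTa) {u : ℕ} (hu : u ∈ R.V) :
    R.iota u u = 1 := by
  have h : R.interval u u = {u} := by
    ext z
    simp only [Dgraph.interval, Finset.mem_filter, Finset.mem_singleton]
    constructor
    · rintro ⟨hz, h1, h2⟩
      by_contra hzu
      refine hRt ⟨[u, z, u], ?_, ?_, by simp, by simp⟩
      · intro v hv
        simp only [List.mem_cons, List.not_mem_nil, or_false] at hv
        rcases hv with rfl | rfl | rfl <;> assumption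
      · simp only [List.Chain', List.isChain_cons_cons, List.isChain_singleton, and_true]
        exact ⟨⟨h1, fun e => hzu e.symm⟩, h2, hzu⟩
    · rintro rfl
      exact ⟨hu, hRr _ hu, hRr _ hu⟩
  simp [Dgraph.iota, h]

lemma aux_iota_proper (hRr : R.IsRefl) (hRed : NoTwoStep R) {v w : ℕ}
    (hvw : (v, w) ∈ R.A) (hne : v ≠ w) : R.iota v w = 2 := by
  have hv : v ∈ R.V := (R.A_sub _ hvw).1
  have hw : w ∈ R.V := (R.A_sub _ hvw).2
  have h : R.interval v w = {v, w} := by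
    ext z
    simp only [Dgraph.interval, Finset.mem_filter, Finset.mem_insert, Finset.mem_singleton]
    constructor
    · rintro ⟨hz, h1, h2⟩
      by_contra hc
      push_neg at hc
      obtain ⟨hzv, hzw⟩ := hc
      refine hRed (v, w) (Finset.mem_filter.mpr ⟨hvw, hne⟩)
        ⟨[v, z, w], ⟨by simp, ?_, ?_, ?_⟩, by simp, by simp, by simp⟩
      · simp only [List.nodup_cons, List.mem_cons, List.not_mem_nil, or_false,
          List.nodup_nil, and_true, not_or]
        exact ⟨⟨fun e => hzv e.symm, hne⟩, hzw, fun h => h⟩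
      · intro x hx
        simp only [List.mem_cons, List.not_mem_nil, or_false] at hx
        rcases hx with rfl | rfl | rfl <;> assumption
      · simp only [List.Chain', List.isChain_cons_cons, List.isChain_singleton, and_true]
        exact ⟨⟨h1, fun e => hzv e.symm⟩, h2, hzw⟩
    · rintro (rfl | rfl)
      · exact ⟨hv, hRr _ hv, hvw⟩
      · exact ⟨hw, hvw, hRr _ hw⟩
  rw [Dgraph.iota, h, Finset.card_insert_of_notMem (by simp [hne]), Finset.card_singleton]

lemma aux_iota_eq (hRr : R.IsRefl) (hRt : R.MemTa) (hRed : NoTwoStep R)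
    {G : Dgraph} {ξ : ℕ → ℕ} (hξ : ξ ∈ Hom G R) {p : ℕ × ℕ} (hp : p ∈ G.Astar) :
    R.iota (ξ p.1) (ξ p.2) = if ξ p.1 = ξ p.2 then 1 else 2 := by
  have hpA : p ∈ G.A := (Finset.mem_filter.mp hp).1
  have hA : (ξ p.1, ξ p.2) ∈ R.A := hξ.2.1 p hpA
  split_ifs with h
  · rw [h] at hA ⊢
    exact aux_iota_loop hRr hRt (R.A_sub _ hA).1
  · exact aux_iota_proper hRr hRed hA h

lemma aux_mu_le (hRr : R.IsRefl) (hRt : R.MemTa) (hRed : NoTwoStep R)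
    {G : Dgraph} {ξ : ℕ → ℕ} (hξ : ξ ∈ Hom G R) :
    mu G R ξ ≤ 2 * G.Astar.card := by
  have h2 : ∑ _p ∈ G.Astar, 2 = 2 * G.Astar.card := by
    rw [Finset.sum_const, smul_eq_mul, mul_comm]
  rw [mu, ← h2]
  refine Finset.sum_le_sum fun p hp => ?_
  rw [aux_iota_eq hRr hRt hRed hξ hp]
  split_ifs <;> omega

lemma aux_mu_strict (hRr : R.IsRefl) (hRt : R.MemTa) (hRed : NoTwoStep R)
    {G : Dgraph} {ξ : ℕ → ℕ} (hξ : ξ ∈ SHom G R) :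
    mu G R ξ = 2 * G.Astar.card := by
  have h2 : ∑ _p ∈ G.Astar, 2 = 2 * G.Astar.card := by
    rw [Finset.sum_const, smul_eq_mul, mul_comm]
  rw [mu, ← h2]
  refine Finset.sum_congr rfl fun p hp => ?_
  rw [aux_iota_eq hRr hRt hRed hξ.1 hp, if_neg (hξ.2 p hp)]

lemma aux_mset_eq_shom (hRr : R.IsRefl) (hRt : R.MemTa) (hRed : NoTwoStep R)
    {G : Dgraph} (hS : (SHom G R).Nonempty) :
    MSet G R = SHom G R := by
  obtain ⟨σ, hσ⟩ := hS
  ext ξ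
  constructor
  · rintro ⟨hξ, hmax⟩
    refine ⟨hξ, fun p hp => ?_⟩
    have h1 : mu G R ξ = 2 * G.Astar.card :=
      le_antisymm (aux_mu_le hRr hRt hRed hξ)
        ((aux_mu_strict hRr hRt hRed hσ) ▸ hmax σ hσ.1)
    have h2 : ∀ q ∈ G.Astar, R.iota (ξ q.1) (ξ q.2) = 2 := by
      have := (Finset.sum_eq_sum_iff_of_le
        (f := fun q : ℕ × ℕ => R.iota (ξ q.1) (ξ q.2)) (g := fun _ : ℕ × ℕ => 2)
        (fun q hq => by show R.iota (ξ q.1) (ξ q.2) ≤ 2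
                        rw [aux_iota_eq hRr hRt hRed hξ hq]; split_ifs <;> omega)).mp
      simp only [Finset.sum_const, smul_eq_mul] at this
      have hh : mu G R ξ = G.Astar.card * 2 := by rw [h1]; ring
      exact this (by rw [← hh]; rfl)
    have := h2 p hp
    rw [aux_iota_eq hRr hRt hRed hξ hp] at this
    intro h
    rw [if_pos h] at this
    omega
  · intro hξ
    exact ⟨hξ.1, fun g hg => (aux_mu_strict hRr hRt hRed hξ) ▸ aux_mu_le hRr hRt hRed hg⟩

lemma aux_restrict_hom {G L : Dgraph} (hL : Subgraph L G) {ξ : ℕ → ℕ}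
    (hξ : ξ ∈ Hom G R) : restrict L.V ξ ∈ Hom L R := by
  refine ⟨fun v hv => ?_, fun p hp => ?_, fun v hv => by simp [restrict, hv]⟩
  · rw [restrict, if_pos hv]
    exact hξ.1 v (hL.1 hv)
  · obtain ⟨h1, h2⟩ := L.A_sub p hp
    rw [restrict, restrict, if_pos h1, if_pos h2]
    exact hξ.2.1 p (hL.2 hp)

lemma aux_restrict_shom {G L : Dgraph} (hL : Subgraph L G) {ξ : ℕ → ℕ}
    (hξ : ξ ∈ SHom G R) : restrict L.V ξ ∈ SHom L R := by
  refine ⟨aux_restrict_hom hL hξ.1, fun p hp => ?_⟩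
  obtain ⟨hpA, hpne⟩ := Finset.mem_filter.mp hp
  obtain ⟨h1, h2⟩ := L.A_sub p hpA
  rw [restrict, restrict, if_pos h1, if_pos h2]
  exact hξ.2 p (Finset.mem_filter.mpr ⟨hL.2 hpA, hpne⟩)

lemma aux_chain'_zip {α : Type*} {r : α → α → Prop} :
    ∀ {l : List α}, l.Chain' r → ∀ p ∈ l.zip l.tail, r p.1 p.2 := by
  intro l
  induction l with
  | nil => simp
  | cons a t ih =>
    intro h p hp
    cases t with
    | nil => simp at hp
    | cons b t' =>
      simp only [List.Chain', List.isChain_cons_cons] at h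
      simp only [List.tail_cons, List.zip_cons_cons, List.mem_cons] at hp
      rcases hp with rfl | hp
      · exact h.1
      · exact ih h.2 p hp

lemma aux_pathGraph_subgraph {G : Dgraph} {P : List ℕ} (h : P ≠ [])
    (hP : G.IsPath P) : Subgraph (Dgraph.pathGraph P h) G := by
  constructor
  · intro v hv
    exact hP.2.2.1 v (List.mem_toFinset.mp hv)
  · intro p hp
    have := aux_chain'_zip hP.2.2.2 p (List.mem_toFinset.mp hp)
    exact this

end Aux

theorem stmt_11 (R : Dgraph) (hRr : R.IsRefl) (hRt : R.MemTa)
    (hRed : NoTwoStep R) :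
    MemR R ∧
    ∀ G : Dgraph, G.MemTa → (SHom G R).Nonempty →
      ((∀ 𝓛 : Set Dgraph, 𝓛.Nonempty → (∀ L ∈ 𝓛, Subgraph L G) →
        MLSet G R 𝓛 = {ξ ∈ Hom G R | ∀ L ∈ 𝓛, restrict L.V ξ ∈ SHom L R}) ∧
      MSet G R = {ξ ∈ Hom G R | ∀ p ∈ G.Astar, R.iota (ξ p.1) (ξ p.2) = 2} ∧
      MSet G R = SHom G R) := by
  have main : ∀ G : Dgraph, (SHom G R).Nonempty → MSet G R = SHom G R :=
    fun G hS => aux_mset_eq_shom hRr hRt hRed hS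
  have hid : restrict R.V id ∈ SHom R R := by
    refine ⟨⟨fun v hv => ?_, fun p hp => ?_, fun v hv => by simp [restrict, hv]⟩,
      fun p hp => ?_⟩
    · rw [restrict, if_pos hv]; exact hv
    · obtain ⟨h1, h2⟩ := R.A_sub p hp
      rw [restrict, restrict, if_pos h1, if_pos h2]; exact hp
    · obtain ⟨hpA, hpne⟩ := Finset.mem_filter.mp hp
      obtain ⟨h1, h2⟩ := R.A_sub p hpA
      rw [restrict, restrict, if_pos h1, if_pos h2]; exact hpne
  constructor
  · refine ⟨hRt, hRr, restrict R.V id, ⟨hid.1, fun L hL => ?_⟩, hid⟩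
    obtain ⟨P, hne, hP, hlen, rfl⟩ := hL
    have hsub := aux_pathGraph_subgraph hne hP
    have hres := aux_restrict_shom hsub hid
    rw [main _ ⟨_, hres⟩]
    exact hres
  · intro G hGt hS
    obtain ⟨σ, hσ⟩ := hS
    refine ⟨?_, ?_, main G ⟨σ, hσ⟩⟩
    · intro 𝓛 h𝓛ne h𝓛
      ext ξ
      simp only [MLSet, Set.mem_setOf_eq, Set.mem_sep_iff]
      refine and_congr_right fun hξ => ?_
      refine forall_congr' fun L => forall_congr' fun hL => ?_
      rw [main L ⟨_, aux_restrict_shom (h𝓛 L hL) hσ⟩]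
    · rw [main G ⟨σ, hσ⟩]
      ext ξ
      simp only [Set.mem_setOf_eq, SHom, Set.mem_sep_iff]
      refine and_congr_right fun hξ => ?_
      refine forall_congr' fun p => forall_congr' fun hp => ?_
      rw [aux_iota_eq hRr hRt hRed hξ hp]
      split_ifs with h
      · simp [h]
      · simp [h]
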